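/- An open set V ⊆ X is σ-invariant if and only if L(f) ∈ C_0(V) for every f ∈ C_c(U) ∩ C_0(V). -/

import Mathlib

open Set Function

/-- `σ : U → X` is a local homeomorphism. -/
def IsLocalHomeo {X : Type*} [TopologicalSpace X] (σ : X → X) (U : Set X) : Prop :=
  ∀ x ∈ U, ∃ W : Set X, x ∈ W ∧ W ⊆ U ∧ IsOpen W ∧ IsOpen (σ '' W) ∧
    Set.InjOn σ W ∧ ContinuousOn σ W ∧ ∀ V : Set X, V ⊆ W → IsOpen V → IsOpen (σ '' V)

/-- `f` is a continuous function on `X` with compact support contained in `U`. -/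
def MemCc {X : Type*} [TopologicalSpace X] (U : Set X) (f : X → ℂ) : Prop :=
  Continuous f ∧ IsCompact (tsupport f) ∧ tsupport f ⊆ U

/-- The transfer operator: `L f x = ∑_{y ∈ U, σ y = x} f y` (a finite sum for
`f ∈ C_c(U)`; the empty sum, in particular the case `σ⁻¹(x) = ∅`, gives `0`). -/
noncomputable def Lop {X : Type*} [TopologicalSpace X] (σ : X → X) (U : Set X)
    (f : X → ℂ) : X → ℂ :=
  fun x => ∑ᶠ y ∈ {y : X | y ∈ U ∧ σ y = x}, f y
/-- `f` is continuous on `X` and vanishes at every point of `X \ V`. -/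
def MemC0 {X : Type*} [TopologicalSpace X] (V : Set X) (f : X → ℂ) : Prop :=
  Continuous f ∧ ∀ x ∉ V, f x = 0

section Aux

variable {X : Type*} [TopologicalSpace X] {σ : X → X} {U : Set X}

/-- Fibers of σ intersected with a compact subset of U are finite. -/
lemma aux_fiber_finite (hσ : IsLocalHomeo σ U) {K : Set X} (hK : IsCompact K)
    (hKU : K ⊆ U) (x : X) : {y | y ∈ K ∧ σ y = x}.Finite := by
  have hcov : ∀ y ∈ K, ∃ W : Set X, IsOpen W ∧ y ∈ W ∧ Set.InjOn σ W := by
    intro y hy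
    obtain ⟨W, hmem, _, hop, _, hinj, _, _⟩ := hσ y (hKU hy)
    exact ⟨W, hop, hmem, hinj⟩
  choose! W hWop hWmem hWinj using hcov
  have hsub : K ⊆ ⋃ y ∈ K, W y := fun y hy => mem_biUnion hy (hWmem y hy)
  obtain ⟨t, htK, htfin, hcov2⟩ := hK.elim_finite_subcover_image (fun y hy => hWop y hy) hsub
  have : {y | y ∈ K ∧ σ y = x} ⊆ ⋃ z ∈ t, {y | y ∈ W z ∧ σ y = x} := by
    rintro y ⟨hyK, hyx⟩
    obtain ⟨z, hz, hyW⟩ := mem_iUnion₂.1 (hcov2 hyK)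
    exact mem_biUnion hz ⟨hyW, hyx⟩
  refine Set.Finite.subset (Set.Finite.biUnion htfin ?_) this
  intro z hz
  apply Set.Subsingleton.finite
  rintro a ⟨haW, hax⟩ b ⟨hbW, hbx⟩
  exact hWinj z (htK hz) haW hbW (hax.trans hbx.symm)

/-- Evaluation of `Lop` for a function supported inside an injectivity window. -/
lemma aux_Lop_eval {W : Set X} (hWU : W ⊆ U) (hinj : Set.InjOn σ W) {g : X → ℂ}
    (hg : support g ⊆ W) {w : X} (hw : w ∈ W) : Lop σ U g (σ w) = g w := by
  unfold Lop
  rw [← finsum_mem_inter_support]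
  have hsub : {y | y ∈ U ∧ σ y = σ w} ∩ support g ⊆ {w} := by
    rintro y ⟨⟨_, hyx⟩, hys⟩
    exact hinj (hg hys) hw hyx
  by_cases hgw : g w = 0
  · have : {y | y ∈ U ∧ σ y = σ w} ∩ support g = ∅ := by
      refine eq_empty_of_subset_empty fun y hy => ?_
      rcases hsub hy with rfl
      exact hy.2 hgw
    rw [this, finsum_mem_empty, hgw]
  · have : {y | y ∈ U ∧ σ y = σ w} ∩ support g = {w} := by
      refine subset_antisymm hsub fun y hy => ?_
      rcases hy with rfl
      exact ⟨⟨hWU hw, rfl⟩, hgw⟩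
    rw [this, finsum_mem_singleton]

lemma aux_Lop_zero_of (g : X → ℂ) (x : X) (h : ∀ y, y ∈ U → σ y = x → g y = 0) :
    Lop σ U g x = 0 :=
  finsum_mem_of_eqOn_zero fun y hy => h y hy.1 hy.2

/-- Additivity of `Lop`. -/
lemma aux_Lop_add (hσ : IsLocalHomeo σ U) {f g : X → ℂ} (hf : MemCc U f)
    (hg : MemCc U g) : Lop σ U (f + g) = Lop σ U f + Lop σ U g := by
  funext x
  obtain ⟨-, hfK, hfU⟩ := hf
  obtain ⟨-, hgK, hgU⟩ := hg
  set s : Set X := {y | y ∈ U ∧ σ y = x} with hs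
  have hfin : (s ∩ (tsupport f ∪ tsupport g)).Finite := by
    have : s ∩ (tsupport f ∪ tsupport g) ⊆
        {y | y ∈ tsupport f ∪ tsupport g ∧ σ y = x} := by
      rintro y ⟨⟨_, hyx⟩, hyT⟩; exact ⟨hyT, hyx⟩
    exact Set.Finite.subset
      (aux_fiber_finite hσ (hfK.union hgK) (union_subset hfU hgU) x) this
  have key : ∀ h : X → ℂ, support h ⊆ tsupport f ∪ tsupport g →
      (∑ᶠ y ∈ s, h y) = ∑ y ∈ hfin.toFinset, h y := by
    intro h hh
    apply finsum_mem_eq_sum_of_inter_support_eq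
    ext y
    simp only [Set.mem_inter_iff, Finset.coe_sort_coe, Set.Finite.coe_toFinset]
    constructor
    · rintro ⟨hys, hysup⟩; exact ⟨⟨hys, hh hysup⟩, hysup⟩
    · rintro ⟨⟨hys, -⟩, hysup⟩; exact ⟨hys, hysup⟩
  have h1 := key f (subset_union_of_subset_left subset_closure _)
  have h2 := key g (subset_union_of_subset_right subset_closure _)
  have h3 := key (f + g) (by
    refine subset_trans (support_add f g) ?_
    exact union_subset_union subset_closure subset_closure)
  show (∑ᶠ y ∈ s, (f + g) y) = (∑ᶠ y ∈ s, f y) + (∑ᶠ y ∈ s, g y)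
  rw [h1, h2, h3, ← Finset.sum_add_distrib]
  rfl

lemma aux_Lop_zero : Lop σ U (0 : X → ℂ) = 0 := by
  funext x
  exact finsum_mem_of_eqOn_zero fun y _ => rfl

lemma aux_MemCc_add {f g : X → ℂ} (hf : MemCc U f) (hg : MemCc U g) :
    MemCc U (f + g) := by
  have hsub : tsupport (f + g) ⊆ tsupport f ∪ tsupport g :=
    closure_minimal (subset_trans (support_add f g)
      (union_subset_union subset_closure subset_closure))
      (isClosed_closure.union isClosed_closure)
  refine ⟨hf.1.add hg.1, ?_, subset_trans hsub (union_subset hf.2.2 hg.2.2)⟩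
  exact IsCompact.of_isClosed_subset (hf.2.1.union hg.2.1) isClosed_closure hsub

lemma aux_Lop_sum {ι : Type*} (hσ : IsLocalHomeo σ U) (t : Finset ι)
    (g : ι → X → ℂ) (hg : ∀ i ∈ t, MemCc U (g i)) :
    Lop σ U (∑ i ∈ t, g i) = ∑ i ∈ t, Lop σ U (g i) ∧ MemCc U (∑ i ∈ t, g i) := by
  classical
  induction t using Finset.induction with
  | empty =>
      refine ⟨by simpa using aux_Lop_zero, ?_⟩
      simp only [Finset.sum_empty]
      refine ⟨continuous_const, ?_, ?_⟩
      · have : tsupport (0 : X → ℂ) = ∅ := by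
          simp [tsupport, Function.support]
        rw [this]; exact isCompact_empty
      · have : tsupport (0 : X → ℂ) = ∅ := by
          simp [tsupport, Function.support]
        rw [this]; exact empty_subset _
  | insert a s hni ih =>
      have hga := hg a (Finset.mem_insert_self a s)
      have hgs : ∀ i ∈ s, MemCc U (g i) := fun i hi =>
        hg i (Finset.mem_insert_of_mem hi)
      obtain ⟨ih1, ih2⟩ := ih hgs
      rw [Finset.sum_insert hni, Finset.sum_insert hni]
      refine ⟨?_, aux_MemCc_add hga ih2⟩
      rw [aux_Lop_add hσ hga ih2, ih1]

end Aux

section Cont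

variable {X : Type*} [TopologicalSpace X] [CompactSpace X] [T2Space X]
  {σ : X → X} {U : Set X}

/-- Continuity of `Lop g` for `g` supported in a single injectivity window. -/
lemma aux_Lop_cont_nice {W : Set X} (hWU : W ⊆ U) (hW : IsOpen W)
    (hWo : IsOpen (σ '' W)) (hinj : Set.InjOn σ W) (hcont : ContinuousOn σ W)
    (himg : ∀ V : Set X, V ⊆ W → IsOpen V → IsOpen (σ '' V))
    {g : X → ℂ} (hgc : Continuous g) (hsupp : tsupport g ⊆ W) :
    Continuous (Lop σ U g) := by
  have hgW : support g ⊆ W := subset_trans subset_closure hsupp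
  have hCc : IsCompact (tsupport g) := IsClosed.isCompact isClosed_closure
  have hC : IsCompact (σ '' tsupport g) := hCc.image_of_continuousOn (hcont.mono hsupp)
  have hclosed : IsClosed (σ '' tsupport g) := hC.isClosed
  have h1 : ContinuousOn (Lop σ U g) (σ '' W) := by
    rw [continuousOn_iff']
    intro t ht
    refine ⟨σ '' (W ∩ g ⁻¹' t), himg _ inter_subset_left (hW.inter (ht.preimage hgc)), ?_⟩
    ext x
    constructor
    · rintro ⟨hxt, w, hw, rfl⟩
      have := aux_Lop_eval hWU hinj hgW hw
      refine ⟨⟨w, ⟨hw, ?_⟩, rfl⟩, ⟨w, hw, rfl⟩⟩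
      simpa [this] using hxt
    · rintro ⟨⟨w, ⟨hw, hwt⟩, rfl⟩, -⟩
      refine ⟨?_, ⟨w, hw, rfl⟩⟩
      have := aux_Lop_eval hWU hinj hgW hw
      simpa [this] using hwt
  have h2 : ContinuousOn (Lop σ U g) (σ '' tsupport g)ᶜ := by
    have heq : EqOn (Lop σ U g) 0 (σ '' tsupport g)ᶜ := by
      intro x hx
      refine aux_Lop_zero_of g x fun y hyU hyx => ?_
      by_contra hgy
      exact hx ⟨y, subset_closure hgy, hyx⟩
    exact (continuousOn_const (c := (0 : ℂ))).congr heq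
  rw [continuous_iff_continuousAt]
  intro x
  by_cases hx : x ∈ σ '' tsupport g
  · exact h1.continuousAt (hWo.mem_nhds (image_mono hsupp hx))
  · exact h2.continuousAt (hclosed.isOpen_compl.mem_nhds hx)

/-- Continuity of `Lop f` for general `f ∈ C_c(U)`. -/
lemma aux_Lop_cont (hU : IsOpen U) (hσ : IsLocalHomeo σ U) {f : X → ℂ}
    (hf : MemCc U f) : Continuous (Lop σ U f) := by
  classical
  obtain ⟨hfc, hfK, hfU⟩ := hf
  -- a window around every point, trivial window off U
  have hσ' : ∀ x : X, ∃ W : Set X, W ⊆ U ∧ IsOpen W ∧ IsOpen (σ '' W) ∧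
      Set.InjOn σ W ∧ ContinuousOn σ W ∧
      (∀ V : Set X, V ⊆ W → IsOpen V → IsOpen (σ '' V)) ∧ (x ∈ U → x ∈ W) := by
    intro x
    by_cases hx : x ∈ U
    · obtain ⟨W, hmem, hWU, hop, hio, hinj, hc, hmap⟩ := hσ x hx
      exact ⟨W, hWU, hop, hio, hinj, hc, hmap, fun _ => hmem⟩
    · refine ⟨∅, empty_subset _, isOpen_empty, by simp, ?_, ?_, ?_, fun h => absurd h hx⟩
      · intro a ha; exact absurd ha (notMem_empty a)
      · exact continuousOn_empty σ
      · intro V hV _; rw [subset_empty_iff.1 hV]; simp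
  choose W hWU hWop hWio hWinj hWc hWmap hWmem using hσ'
  -- finite subcover of the support
  have hcov : tsupport f ⊆ ⋃ y : tsupport f, W y :=
    fun y hy => mem_iUnion.2 ⟨⟨y, hy⟩, hWmem y (hfU hy)⟩
  obtain ⟨t, ht⟩ := hfK.elim_finite_subcover (fun y : tsupport f => W y)
    (fun y => hWop y) hcov
  -- index by Fin n
  set n := t.card with hn
  have e : Fin n ≃ {y // y ∈ t} := t.equivFin.symm
  set s : Fin n → Set X := fun i => W ((e i : tsupport f) : X) with hsdef
  have hsopen : ∀ i, IsOpen (s i) := fun i => hWop _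
  have hcov' : tsupport f ⊆ ⋃ i, s i := by
    intro y hy
    obtain ⟨z, hzt, hyz⟩ := mem_iUnion₂.1 (ht hy)
    refine mem_iUnion.2 ⟨e.symm ⟨z, hzt⟩, ?_⟩
    simpa [hsdef] using hyz
  obtain ⟨φ, hφsupp, hφone, hφmem, hφcp⟩ :=
    exists_continuous_sum_one_of_isOpen_isCompact hsopen hfK hcov'
  -- the pieces
  set g : Fin n → X → ℂ := fun i x => (φ i x : ℂ) * f x with hgdef
  have hgcont : ∀ i, Continuous (g i) := fun i =>
    (Complex.continuous_ofReal.comp (φ i).continuous).mul hfc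
  have hgsupp : ∀ i, tsupport (g i) ⊆ s i := by
    intro i
    refine subset_trans (closure_mono ?_) (hφsupp i)
    intro x hx
    simp only [hgdef, mem_support, ne_eq] at hx
    intro h0
    simp [h0] at hx
  have hgCc : ∀ i, MemCc U (g i) := by
    intro i
    refine ⟨hgcont i, IsClosed.isCompact isClosed_closure,
      subset_trans (hgsupp i) (hWU _)⟩
  -- f equals the sum of the pieces
  have hfeq : f = ∑ i : Fin n, g i := by
    funext x
    simp only [Finset.sum_apply, hgdef, ← Finset.sum_mul]
    by_cases hfx : f x = 0
    · simp [hfx]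
    · have hx : x ∈ tsupport f := subset_closure hfx
      have := hφone hx
      simp only [Finset.sum_apply, Pi.one_apply] at this
      rw [show (∑ i : Fin n, ((φ i x : ℝ) : ℂ)) = ((∑ i : Fin n, φ i x : ℝ) : ℂ) by
        push_cast; ring]
      rw [this]
      simp
  obtain ⟨hsum, -⟩ := aux_Lop_sum hσ Finset.univ g (fun i _ => hgCc i)
  rw [hfeq, hsum]
  have : (∑ i : Fin n, Lop σ U (g i)) = fun x => ∑ i : Fin n, Lop σ U (g i) x := by
    funext x; simp
  rw [this]
  apply continuous_finset_sum
  intro i _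
  exact aux_Lop_cont_nice (hWU _) (hWop _) (hWio _) (hWinj _) (hWc _) (hWmap _)
    (hgcont i) (hgsupp i)

end Cont

/-- An open set `V ⊆ X` is σ-invariant (i.e. `σ (V ∩ U) ⊆ V`) iff
`L f ∈ C_0(V)` for every `f ∈ C_c(U) ∩ C_0(V)`. -/
theorem stmt_6 {X : Type*} [TopologicalSpace X] [CompactSpace X] [T2Space X]
    (U : Set X) (hU : IsOpen U) (σ : X → X) (hσ : IsLocalHomeo σ U)
    (V : Set X) (hV : IsOpen V) :
    σ '' (V ∩ U) ⊆ V ↔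
      ∀ f : X → ℂ, MemCc U f → MemC0 V f → MemC0 V (Lop σ U f) := by
  constructor
  · intro hinv f hfCc hfC0
    refine ⟨aux_Lop_cont hU hσ hfCc, ?_⟩
    intro x hx
    refine aux_Lop_zero_of f x fun y hyU hyx => ?_
    by_contra hfy
    have hyV : y ∈ V := by
      by_contra hyV
      exact hfy (hfC0.2 y hyV)
    exact hx (hyx ▸ hinv ⟨y, ⟨hyV, hyU⟩, rfl⟩)
  · intro h
    rintro _ ⟨x, ⟨hxV, hxU⟩, rfl⟩
    by_contra hσxV
    obtain ⟨W, hmem, hWU, hWop, hWio, hWinj, hWc, hWmap⟩ := hσ x hxU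
    -- Urysohn bump at x supported in W ∩ V
    have hOopen : IsOpen (W ∩ V) := hWop.inter hV
    have hxO : x ∈ W ∩ V := ⟨hmem, hxV⟩
    obtain ⟨φ, hφsupp, hφone, hφmem⟩ := exists_tsupport_one_of_isOpen_isClosed hOopen
      (IsClosed.isCompact isClosed_closure) (isClosed_singleton (x := x))
      (singleton_subset_iff.2 hxO)
    set f : X → ℂ := fun y => (φ y : ℂ) with hfdef
    have hfc : Continuous f := Complex.continuous_ofReal.comp φ.continuous
    have hfsupp : tsupport f ⊆ W ∩ V := by
      refine subset_trans (closure_mono ?_) hφsupp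
      intro y hy h0
      simp only [hfdef, mem_support, ne_eq] at hy
      simp [h0] at hy
    have hfCc : MemCc U f := ⟨hfc, IsClosed.isCompact isClosed_closure,
      subset_trans hfsupp (subset_trans inter_subset_left hWU)⟩
    have hfC0 : MemC0 V f := by
      refine ⟨hfc, fun y hy => ?_⟩
      by_contra h0
      exact hy (inter_subset_right (hfsupp (subset_closure h0)))
    have hL := (h f hfCc hfC0).2 (σ x) hσxV
    have hfx : f x = 1 := by
      simp [hfdef, hφone rfl]
    have heval : Lop σ U f (σ x) = f x := by
      refine aux_Lop_eval hWU hWinj ?_ hmem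
      exact subset_trans (subset_trans subset_closure hfsupp) inter_subset_left
    rw [heval, hfx] at hL
    exact one_ne_zero hL
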